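/- (Local abelianness) Fix an instruction field I. If α and β are both acceptable sequences of topplings for the pair (η,h), and m_α = m_β (each site is toppled the same number of times in α as in β), then Φ_α(η,h) = Φ_β(η,h). -/

import Mathlib

open scoped ENNReal NNReal
open MeasureTheory

namespace ARW

/-- A site of the lattice `ℤ^d`. -/
abbrev Site (d : ℕ) := Fin d → ℤ

/-- The set `ℕ_𝔰 = ℕ ∪ {𝔰}` of possible values at a site. -/
inductive NS where
  | nat : ℕ → NS
  | s : NS
deriving DecidableEq

/-- Rank function realizing the total order `0 < 𝔰 < 1 < 2 < ⋯`
(`𝔰` is placed at `1/2`). -/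
def NS.val : NS → ℚ
  | .nat n => n
  | .s => 1/2

instance : LE NS := ⟨fun a b => a.val ≤ b.val⟩
instance : LT NS := ⟨fun a b => a.val < b.val⟩

/-- Remove one particle: `n − 1`, with `𝔰 − 1 = 0`. -/
def NS.dec : NS → NS
  | .nat 0 => .nat 0
  | .nat (n+1) => .nat n
  | .s => .nat 0

/-- Add one particle: `n + 1`, with `𝔰 + 1 = 2`. -/
def NS.inc : NS → NS
  | .nat n => .nat (n+1)
  | .s => .nat 2

/-- Multiplication by `𝔰`: `n·𝔰 = n` for `n ≥ 2`, `1·𝔰 = 𝔰`, `𝔰·𝔰 = 𝔰`. -/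
def NS.mulS : NS → NS
  | .nat 0 => .nat 0
  | .nat 1 => .s
  | .nat (n+2) => .nat (n+2)
  | .s => .s

/-- A configuration of the ARW. -/
abbrev Config (d : ℕ) := Site d → NS

/-- An odometer. -/
abbrev Odom (d : ℕ) := Site d → ℕ

/-- An instruction: either a sleep instruction `τ_{x𝔰}`, or a move instruction
`τ_{xy}` recorded through the displacement `z = y − x ≠ 0`. -/
inductive Instr (d : ℕ) where
  | sleep : Instr d
  | move : (z : Site d) → z ≠ 0 → Instr d

/-- Applying an instruction at site `x` to a configuration: `τ_{x𝔰}` replaces `η(x)` by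
`η(x)·𝔰`; `τ_{xy}` (with `y = x + z`) decreases `η(x)` by one and increases `η(y)` by one. -/
def applyInstr {d : ℕ} (x : Site d) (ι : Instr d) (η : Config d) : Config d :=
  match ι with
  | .sleep => Function.update η x (η x).mulS
  | .move z _ => fun w =>
      if w = x then (η x).dec
      else if w = x + z then (η (x + z)).inc
      else η w

/-- A field of instructions `(τ^{x,j})_{x ∈ ℤ^d, j ∈ ℕ}`. -/
abbrev InstrField (d : ℕ) := Site d → ℕ → Instr d

/-- Toppling site `x`: `Φ_x(η,h) = (τ^{x,h(x)+1} η, h + δ_x)`. -/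
def topple {d : ℕ} (I : InstrField d) (x : Site d) (s : Config d × Odom d) :
    Config d × Odom d :=
  (applyInstr x (I x (s.2 x + 1)) s.1, Function.update s.2 x (s.2 x + 1))

/-- `Φ_α` for a finite sequence `α = (x_1, …, x_k)` of sites (`x_1` acts first). -/
def toppleSeq {d : ℕ} (I : InstrField d) :
    List (Site d) → Config d × Odom d → Config d × Odom d
  | [], s => s
  | x :: α, s => toppleSeq I α (topple I x s)

/-- Site `x` is unstable for `η` if `η(x) ≥ 1`. -/
def Unstable {d : ℕ} (η : Config d) (x : Site d) : Prop := NS.nat 1 ≤ η x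

/-- Toppling `x` is acceptable for `η` if `η(x) ≠ 0`. -/
def AcceptableAt {d : ℕ} (η : Config d) (x : Site d) : Prop := η x ≠ NS.nat 0

/-- `α` is a legal sequence of topplings for `(η,h)`: each successive toppling is legal. -/
inductive LegalSeq {d : ℕ} (I : InstrField d) : List (Site d) → Config d × Odom d → Prop
  | nil (s : Config d × Odom d) : LegalSeq I [] s
  | cons {x : Site d} {α : List (Site d)} {s : Config d × Odom d} :
      Unstable s.1 x → LegalSeq I α (topple I x s) → LegalSeq I (x :: α) s

/-- `α` is an acceptable sequence of topplings for `(η,h)`. -/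
inductive AcceptableSeq {d : ℕ} (I : InstrField d) : List (Site d) → Config d × Odom d → Prop
  | nil (s : Config d × Odom d) : AcceptableSeq I [] s
  | cons {x : Site d} {α : List (Site d)} {s : Config d × Odom d} :
      AcceptableAt s.1 x → AcceptableSeq I α (topple I x s) → AcceptableSeq I (x :: α) s

/-- `η` is stable in `V`: every `x ∈ V` is stable for `η`. -/
def StableIn {d : ℕ} (η : Config d) (V : Set (Site d)) : Prop :=
  ∀ x ∈ V, ¬ Unstable η x

/-- `m_{V,η,h}(x) = sup { m_β(x) : β ⊆ V legal for (η,h) }`, as an element of `ℕ∞`. -/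
noncomputable def mV {d : ℕ} (I : InstrField d) (V : Set (Site d)) (η : Config d) (h : Odom d)
    (x : Site d) : ℕ∞ :=
  ⨆ (β : List (Site d)) (_ : (∀ y ∈ β, y ∈ V) ∧ LegalSeq I β (η, h)), (β.count x : ℕ∞)

/-- `m_{η,h} = m_{ℤ^d,η,h}`. -/
noncomputable def mFull {d : ℕ} (I : InstrField d) (η : Config d) (h : Odom d) :
    Site d → ℕ∞ :=
  mV I Set.univ η h

/-- The zero odometer. -/
def zeroOdom (d : ℕ) : Odom d := fun _ => 0

/-- `η` is `I`-stabilizable: `m_{η;I}(x) < ∞` for every `x`. -/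
def Stabilizable {d : ℕ} (I : InstrField d) (η : Config d) : Prop :=
  ∀ x : Site d, mFull I η (zeroOdom d) x < ⊤

/-- `η` is `I`-explosive: `m_{η;I}(x) = ∞` for every `x`. -/
def Explosive {d : ℕ} (I : InstrField d) (η : Config d) : Prop :=
  ∀ x : Site d, mFull I η (zeroOdom d) x = ⊤

/-! ### Auxiliary lemmas for local abelianness -/

lemma NS.inc_ne_zero (v : NS) : v.inc ≠ .nat 0 := by
  cases v <;> simp [NS.inc]

lemma NS.dec_inc (v : NS) (hv : v ≠ .nat 0) : v.dec.inc = v.inc.dec := by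
  cases v with
  | nat n => cases n with
    | zero => exact absurd rfl hv
    | succ n => rfl
  | s => rfl

lemma NS.mulS_inc (v : NS) (hv : v ≠ .nat 0) : v.mulS.inc = v.inc.mulS := by
  cases v with
  | nat n => match n with
    | 0 => exact absurd rfl hv
    | 1 => rfl
    | (n+2) => rfl
  | s => rfl

/-- Pointwise action of an instruction at `x` on the value at site `w`. -/
def instrFun {d : ℕ} (x : Site d) (ι : Instr d) (w : Site d) : NS → NS :=
  match ι with
  | .sleep => if w = x then NS.mulS else id
  | .move z _ => if w = x then NS.dec else if w = x + z then NS.inc else id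

lemma applyInstr_eq {d : ℕ} (x : Site d) (ι : Instr d) (η : Config d) :
    applyInstr x ι η = fun w => instrFun x ι w (η w) := by
  funext w
  cases ι with
  | sleep =>
      simp only [applyInstr, instrFun, Function.update]
      split_ifs with h1 <;> simp_all
  | move z hz =>
      simp only [applyInstr, instrFun]
      split_ifs with h1 h2 <;> simp_all

lemma instrFun_ne_zero {d : ℕ} {x w : Site d} (ι : Instr d) (hxw : w ≠ x) {v : NS}
    (hv : v ≠ .nat 0) : instrFun x ι w v ≠ .nat 0 := by
  cases ι with
  | sleep =>
      simp only [instrFun]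
      split_ifs with h1
      · exact absurd h1 hxw
      · exact hv
  | move z hz =>
      simp only [instrFun]
      split_ifs with h1 h2
      · exact absurd h1 hxw
      · exact NS.inc_ne_zero v
      · exact hv

lemma instrFun_comm {d : ℕ} {x y : Site d} (w : Site d) (hxy : x ≠ y)
    (ι₁ ι₂ : Instr d) {v : NS} (hx : w = x → v ≠ .nat 0) (hy : w = y → v ≠ .nat 0) :
    instrFun x ι₁ w (instrFun y ι₂ w v) = instrFun y ι₂ w (instrFun x ι₁ w v) := by
  cases ι₁ <;> cases ι₂ <;> simp only [instrFun] <;> split_ifs <;>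
    first
      | rfl
      | (exfalso; subst_vars; exact hxy rfl)
      | (subst_vars; first
          | exact (NS.mulS_inc v (by tauto)).symm
          | exact NS.mulS_inc v (by tauto)
          | exact (NS.dec_inc v (by tauto)).symm
          | exact NS.dec_inc v (by tauto))

lemma topple_fst_ne_zero {d : ℕ} (I : InstrField d) {x y : Site d} (hxy : x ≠ y)
    {s : Config d × Odom d} (hx : s.1 x ≠ .nat 0) :
    (topple I y s).1 x ≠ .nat 0 := by
  simp only [topple, applyInstr_eq]
  exact instrFun_ne_zero _ hxy hx

lemma topple_comm {d : ℕ} (I : InstrField d) {x y : Site d} (hxy : x ≠ y)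
    (s : Config d × Odom d) (hx : s.1 x ≠ .nat 0) (hy : s.1 y ≠ .nat 0) :
    topple I x (topple I y s) = topple I y (topple I x s) := by
  obtain ⟨η, h⟩ := s
  have hux : Function.update h y (h y + 1) x = h x := Function.update_of_ne hxy _ _
  have huy : Function.update h x (h x + 1) y = h y := Function.update_of_ne (Ne.symm hxy) _ _
  simp only [topple, hux, huy]
  refine Prod.ext ?_ ?_
  · simp only [applyInstr_eq]
    funext w
    exact instrFun_comm w hxy _ _ (fun hw => hw ▸ hx) (fun hw => hw ▸ hy)
  · exact Function.update_comm (Ne.symm hxy) _ _ h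

lemma toppleSeq_append {d : ℕ} (I : InstrField d) (α β : List (Site d))
    (s : Config d × Odom d) :
    toppleSeq I (α ++ β) s = toppleSeq I β (toppleSeq I α s) := by
  induction α generalizing s with
  | nil => rfl
  | cons a t ih => simp only [List.cons_append, toppleSeq]; exact ih _

lemma exists_first_split {A : Type*} [DecidableEq A] {x : A} {l : List A} (hx : x ∈ l) :
    ∃ p q, l = p ++ x :: q ∧ x ∉ p := by
  induction l with
  | nil => cases hx
  | cons a t ih =>
      by_cases hax : x = a
      · subst hax
        exact ⟨[], t, rfl, by simp⟩
      · rcases List.mem_cons.mp hx with h | h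
        · exact absurd h hax
        · obtain ⟨p, q, rfl, hp⟩ := ih h
          exact ⟨a :: p, q, rfl, by simp [hax, hp]⟩

/-- Pull the first occurrence of `x` to the front of an acceptable sequence. -/
lemma pull_front {d : ℕ} (I : InstrField d) (x : Site d) (γ δ : List (Site d))
    (s : Config d × Odom d) (hγ : x ∉ γ) (hx : s.1 x ≠ .nat 0)
    (hacc : AcceptableSeq I (γ ++ x :: δ) s) :
    AcceptableSeq I (γ ++ δ) (topple I x s) ∧
      toppleSeq I (γ ++ x :: δ) s = toppleSeq I (γ ++ δ) (topple I x s) := by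
  induction γ generalizing s with
  | nil =>
      rcases hacc with _ | ⟨_, hacc⟩
      exact ⟨hacc, rfl⟩
  | cons y γ' ih =>
      have hxy : x ≠ y := fun hh => hγ (hh ▸ List.mem_cons_self (a := y) (l := γ'))
      rcases hacc with _ | ⟨hy, hacc⟩
      have hx' : (topple I y s).1 x ≠ .nat 0 := topple_fst_ne_zero I hxy hx
      obtain ⟨ih1, ih2⟩ := ih (topple I y s) (fun hh => hγ (List.mem_cons_of_mem _ hh)) hx' hacc
      have hcomm := topple_comm I hxy s hx hy
      have hy' : (topple I x s).1 y ≠ .nat 0 := topple_fst_ne_zero I (Ne.symm hxy) hy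
      refine ⟨AcceptableSeq.cons hy' (hcomm ▸ ih1), ?_⟩
      simp only [List.cons_append, toppleSeq, List.append_eq] at ih2 ⊢
      rw [ih2, hcomm]

lemma abel_aux {d : ℕ} (I : InstrField d) (α : List (Site d)) :
    ∀ (β : List (Site d)) (s : Config d × Odom d),
      AcceptableSeq I α s → AcceptableSeq I β s →
      (∀ x : Site d, α.count x = β.count x) →
      toppleSeq I α s = toppleSeq I β s := by
  induction α with
  | nil =>
      intro β s _ _ hm
      have : β = [] := by
        apply List.eq_nil_iff_forall_not_mem.mpr
        intro a ha
        have := (hm a).symm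
        simp only [List.count_nil] at this
        exact absurd (List.count_pos_iff.mpr ha) (by omega)
      rw [this]
  | cons x α' ih =>
      intro β s hα hβ hm
      rcases hα with _ | ⟨hx, hα'⟩
      have hxβ : x ∈ β := by
        apply List.count_pos_iff.mp
        have := (hm x).symm
        simp only [List.count_cons_self] at this
        omega
      obtain ⟨γ, δ, rfl, hγ⟩ := exists_first_split hxβ
      obtain ⟨hacc', heq⟩ := pull_front I x γ δ s hγ hx hβ
      have hcount : ∀ z : Site d, α'.count z = (γ ++ δ).count z := by
        intro z
        have h1 := hm z
        have h2 : γ.count x = 0 := List.count_eq_zero.mpr hγ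
        rw [List.count_append]
        by_cases hz : z = x
        · subst hz
          simp only [List.count_cons, List.count_append, if_pos rfl, h2] at h1
          omega
        · have hz' : ¬ (x = z) := fun hh => hz hh.symm
          simp only [List.count_cons, List.count_append, if_neg hz, if_neg hz'] at h1
          omega
      have := ih (γ ++ δ) (topple I x s) hα' hacc' hcount
      simp only [toppleSeq]
      rw [this, ← heq]

/-- **Local abelianness**: if `α` and `β` are acceptable sequences of topplings for `(η,h)`
with `m_α = m_β`, then `Φ_α(η,h) = Φ_β(η,h)`. -/
theorem local_abelianness {d : ℕ} (I : InstrField d) (η : Config d) (h : Odom d)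
    (α β : List (Site d))
    (hα : AcceptableSeq I α (η, h)) (hβ : AcceptableSeq I β (η, h))
    (hm : ∀ x : Site d, α.count x = β.count x) :
    toppleSeq I α (η, h) = toppleSeq I β (η, h) := by
  exact abel_aux I α β (η, h) hα hβ hm

end ARW
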